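/- With 𝒜 = [[A₁, B₁ᵀ, 0],[C₁, -A₂, B₂ᵀ],[0, C₂, A₃]] and the block lower-triangular preconditioner 𝒫₁ = [[A₁,0,0],[C₁,-S₂,0],[0,C₂,S₃]], where S₂ = A₂ + C₁A₁⁻¹B₁ᵀ and S₃ = A₃ + C₂S₂⁻¹B₂ᵀ are invertible, the preconditioned matrix satisfies 𝒫₁⁻¹𝒜 = [[I, A₁⁻¹B₁ᵀ, 0],[0, I, -S₂⁻¹B₂ᵀ],[0,0,I]], and hence (𝒫₁⁻¹𝒜 - I)³ = 0. -/

import Mathlib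

open Matrix

theorem stmt_1 {K : Type*} [Field K] {n₁ n₂ n₃ : ℕ}
    (A₁ : Matrix (Fin n₁) (Fin n₁) K) (A₂ : Matrix (Fin n₂) (Fin n₂) K)
    (A₃ : Matrix (Fin n₃) (Fin n₃) K)
    (B₁ C₁ : Matrix (Fin n₂) (Fin n₁) K) (B₂ C₂ : Matrix (Fin n₃) (Fin n₂) K)
    (hA₁ : IsUnit A₁)
    (S₂ : Matrix (Fin n₂) (Fin n₂) K) (hS₂def : S₂ = A₂ + C₁ * A₁⁻¹ * B₁ᵀ)
    (hS₂ : IsUnit S₂)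
    (S₃ : Matrix (Fin n₃) (Fin n₃) K) (hS₃def : S₃ = A₃ + C₂ * S₂⁻¹ * B₂ᵀ)
    (hS₃ : IsUnit S₃)
    (𝒜 : Matrix ((Fin n₁ ⊕ Fin n₂) ⊕ Fin n₃) ((Fin n₁ ⊕ Fin n₂) ⊕ Fin n₃) K)
    (h𝒜 : 𝒜 = fromBlocks (fromBlocks A₁ B₁ᵀ C₁ (-A₂)) (fromRows 0 B₂ᵀ)
      (fromCols 0 C₂) A₃)
    (P : Matrix ((Fin n₁ ⊕ Fin n₂) ⊕ Fin n₃) ((Fin n₁ ⊕ Fin n₂) ⊕ Fin n₃) K)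
    (hP : P = fromBlocks (fromBlocks A₁ 0 C₁ (-S₂)) 0 (fromCols 0 C₂) S₃) :
    P⁻¹ * 𝒜 = fromBlocks (fromBlocks 1 (A₁⁻¹ * B₁ᵀ) 0 1) (fromRows 0 (-(S₂⁻¹ * B₂ᵀ))) 0 1 ∧
      (P⁻¹ * 𝒜 - 1) ^ 3 = 0 := by
  have hdA₁ : IsUnit A₁.det := (Matrix.isUnit_iff_isUnit_det A₁).mp hA₁
  have hdS₂ : IsUnit S₂.det := (Matrix.isUnit_iff_isUnit_det S₂).mp hS₂
  have hdS₃ : IsUnit S₃.det := (Matrix.isUnit_iff_isUnit_det S₃).mp hS₃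
  set U : Matrix ((Fin n₁ ⊕ Fin n₂) ⊕ Fin n₃) ((Fin n₁ ⊕ Fin n₂) ⊕ Fin n₃) K :=
    fromBlocks (fromBlocks 1 (A₁⁻¹ * B₁ᵀ) 0 1) (fromRows 0 (-(S₂⁻¹ * B₂ᵀ))) 0 1 with hU
  have hdP : IsUnit P.det := by
    rw [hP, Matrix.det_fromBlocks_zero₁₂, Matrix.det_fromBlocks_zero₁₂]
    exact ((hdA₁.mul ((Matrix.isUnit_iff_isUnit_det _).mp hS₂.neg)).mul hdS₃)
  have e1 : A₁ * A₁⁻¹ = 1 := Matrix.mul_nonsing_inv A₁ hdA₁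
  have e2 : S₂ * S₂⁻¹ = 1 := Matrix.mul_nonsing_inv S₂ hdS₂
  have hPU : P * U = 𝒜 := by
    rw [hP, hU, h𝒜, Matrix.fromBlocks_multiply, Matrix.fromBlocks_multiply,
      Matrix.fromBlocks_mul_fromRows, Matrix.fromCols_mul_fromBlocks,
      Matrix.fromCols_mul_fromRows]
    simp [← Matrix.mul_assoc, e1, e2]
    refine ⟨by rw [hS₂def]; abel, by rw [hS₃def]; abel⟩
  have hmain : P⁻¹ * 𝒜 = U := by
    rw [← hPU, ← Matrix.mul_assoc, Matrix.nonsing_inv_mul P hdP, Matrix.one_mul]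
  refine ⟨hmain, ?_⟩
  rw [hmain]
  have hN : U - 1 = fromBlocks (fromBlocks 0 (A₁⁻¹ * B₁ᵀ) 0 0) (fromRows 0 (-(S₂⁻¹ * B₂ᵀ))) 0 0 := by
    rw [hU, show (1 : Matrix ((Fin n₁ ⊕ Fin n₂) ⊕ Fin n₃) ((Fin n₁ ⊕ Fin n₂) ⊕ Fin n₃) K)
        = fromBlocks (fromBlocks 1 0 0 1) 0 0 1 from by simp [Matrix.fromBlocks_one],
      sub_eq_add_neg, Matrix.fromBlocks_neg, Matrix.fromBlocks_neg,
      Matrix.fromBlocks_add, Matrix.fromBlocks_add]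
    simp
  rw [hN, pow_succ, pow_two]
  simp [Matrix.fromBlocks_multiply, Matrix.fromBlocks_mul_fromRows, Matrix.fromRows_zero]
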